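/- Let $G$ be a split metacyclic $2$-group $G = \langle a\rangle \rtimes \langle b\rangle \cong C_{2^n} \rtimes C_{2^m}$ whose center is not cyclic. Then every element of $\Omega_1(G)$ lies in the center of $G$; in fact $\Omega_1(G) = \langle a^{2^{n-1}}\rangle \times \langle b^{2^{m-1}}\rangle \leq Z(G)$. -/

import Mathlib

section Aux

variable {G : Type*} [Group G]

/-- A subgroup contained in `zpowers a` is cyclic. -/
lemma aux_cyc_le {a : G} {H : Subgroup G} (h : H ≤ Subgroup.zpowers a) : IsCyclic H := by
  have hc : IsCyclic (Subgroup.zpowers a) := by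
    refine ⟨⟨a, Subgroup.mem_zpowers a⟩, ?_⟩
    rintro ⟨x, hx⟩
    obtain ⟨k, rfl⟩ := Subgroup.mem_zpowers_iff.mp hx
    exact ⟨k, by ext; simp⟩
  exact isCyclic_of_surjective (Subgroup.subgroupOfEquivOfLe h) (MulEquiv.surjective _)

/-- In a cyclic `2`-group, every nontrivial element has the unique involution among
its powers. -/
lemma aux_reach {b : G} {m : ℕ} (hm : 1 ≤ m) (hb : orderOf b = 2 ^ m) {j : ℤ}
    (hj : b ^ j ≠ 1) : b ^ (2 ^ (m - 1) : ℕ) ∈ Subgroup.zpowers (b ^ j) := by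
  set d : ℕ := Int.gcd j (2 ^ m) with hd
  have hdvd : d ∣ 2 ^ m := by
    have h1 : (d : ℤ) ∣ (2 : ℤ) ^ m := Int.gcd_dvd_right j (2 ^ m)
    exact_mod_cast h1
  obtain ⟨c, hcm, hdc⟩ := (Nat.dvd_prime_pow Nat.prime_two).mp hdvd
  have hcm' : c ≤ m - 1 := by
    rcases Nat.lt_or_ge c m with h | h
    · omega
    · exfalso
      apply hj
      rw [← orderOf_dvd_iff_zpow_eq_one, hb]
      have : c = m := le_antisymm hcm h
      have hdj : (d : ℤ) ∣ j := Int.gcd_dvd_left j (2 ^ m)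
      rw [hdc, this] at hdj
      exact_mod_cast hdj
  -- b ^ d is a power of b ^ j
  have hbd : b ^ (d : ℤ) ∈ Subgroup.zpowers (b ^ j) := by
    have hbez : (d : ℤ) = j * Int.gcdA j (2 ^ m) + 2 ^ m * Int.gcdB j (2 ^ m) :=
      Int.gcd_eq_gcd_ab j (2 ^ m)
    have hb1 : b ^ ((2 : ℤ) ^ m) = 1 := by
      have : ((2 ^ m : ℕ) : ℤ) = (2 : ℤ) ^ m := by push_cast; ring
      rw [← this, zpow_natCast, ← hb, pow_orderOf_eq_one]
    rw [hbez, zpow_add, zpow_mul, zpow_mul, hb1, one_zpow, mul_one]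
    exact ⟨Int.gcdA j (2 ^ m), rfl⟩
  have hkey : b ^ (2 ^ (m - 1) : ℕ) = (b ^ (d : ℤ)) ^ (2 ^ (m - 1 - c) : ℕ) := by
    rw [zpow_natCast, ← pow_mul]
    congr 1
    rw [hdc, ← pow_add]
    congr 1
    omega
  rw [hkey]
  exact pow_mem hbd _

end Aux
open scoped Pointwise

/-- Let `G = ⟨a⟩ ⋊ ⟨b⟩ ≅ C_{2^n} ⋊ C_{2^m}` be a split metacyclic `2`-group whose
center is not cyclic. Then `Ω₁(G) ≤ Z(G)` and
`Ω₁(G) = ⟨a^(2^(n-1))⟩ ⊔ ⟨b^(2^(m-1))⟩`. -/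
theorem stmt_10 (G : Type*) [Group G] (a b : G) (n m : ℕ)
    (hn : 1 ≤ n) (hm : 1 ≤ m)
    (ha : orderOf a = 2 ^ n) (hb : orderOf b = 2 ^ m)
    (hN : (Subgroup.zpowers a).Normal)
    (hgen : Subgroup.zpowers a ⊔ Subgroup.zpowers b = ⊤)
    (hint : Subgroup.zpowers a ⊓ Subgroup.zpowers b = ⊥)
    (hZ : ¬ IsCyclic (Subgroup.center G)) :
    Subgroup.closure {g : G | g ^ 2 = 1} ≤ Subgroup.center G ∧
    Subgroup.closure {g : G | g ^ 2 = 1} =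
      Subgroup.zpowers (a ^ 2 ^ (n - 1)) ⊔ Subgroup.zpowers (b ^ 2 ^ (m - 1)) := by
  have h2n : (2 : ℤ) ^ n = 2 ^ (n - 1) * 2 := by rw [← pow_succ]; congr 1; omega
  have h2m : (2 : ℤ) ^ m = 2 ^ (m - 1) * 2 := by rw [← pow_succ]; congr 1; omega
  have haord : a ^ ((2 : ℤ) ^ n) = 1 := by
    rw [← orderOf_dvd_iff_zpow_eq_one, ha]; push_cast; exact dvd_refl _
  -- every element decomposes as a^i * b^j
  have decomp : ∀ g : G, ∃ (i j : ℤ), g = a ^ i * b ^ j := by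
    intro g
    have hg : g ∈ ((Subgroup.zpowers a : Set G) * (Subgroup.zpowers b : Set G)) := by
      rw [← Subgroup.normal_mul, hgen]
      exact Subgroup.mem_top g
    obtain ⟨x, hx, y, hy, rfl⟩ := hg
    obtain ⟨i, rfl⟩ := Subgroup.mem_zpowers_iff.mp hx
    obtain ⟨j, rfl⟩ := Subgroup.mem_zpowers_iff.mp hy
    exact ⟨i, j, rfl⟩
  -- if g commutes with a and b then g is central
  have center_of : ∀ g : G, Commute a g → Commute b g → g ∈ Subgroup.center G := by
    intro g hag hbg
    have h1 : Subgroup.zpowers a ⊔ Subgroup.zpowers b ≤ Subgroup.centralizer {g} := by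
      refine sup_le ?_ ?_ <;> rw [Subgroup.zpowers_le] <;>
        rw [Subgroup.mem_centralizer_iff]
      · intro h hh; rw [Set.mem_singleton_iff] at hh; subst hh; exact hag.symm
      · intro h hh; rw [Set.mem_singleton_iff] at hh; subst hh; exact hbg.symm
    rw [hgen] at h1
    rw [Subgroup.mem_center_iff]
    intro x
    have hx := h1 (Subgroup.mem_top x)
    exact (Subgroup.mem_centralizer_iff.mp hx g (Set.mem_singleton g)).symm
  -- key step: a commutes with b^(2^(m-1))
  have hK : Commute a (b ^ (2 ^ (m - 1) : ℕ)) := by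
    by_contra hK
    apply hZ
    refine aux_cyc_le (a := a) ?_
    intro z hz
    obtain ⟨i, j, rfl⟩ := decomp z
    have hcomm : a * (a ^ i * b ^ j) = (a ^ i * b ^ j) * a :=
      Subgroup.mem_center_iff.mp hz a
    have hc : Commute a (b ^ j) := by
      have h2 : a ^ i * (a * b ^ j) = a ^ i * (b ^ j * a) := by
        calc a ^ i * (a * b ^ j) = a * (a ^ i * b ^ j) := by
              rw [← mul_assoc, ← mul_assoc, (Commute.self_zpow a i).eq]
          _ = (a ^ i * b ^ j) * a := hcomm
          _ = a ^ i * (b ^ j * a) := by rw [mul_assoc]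
      exact mul_left_cancel h2
    by_cases hj1 : b ^ j = 1
    · rw [hj1, mul_one]
      exact ⟨i, rfl⟩
    · exfalso
      apply hK
      obtain ⟨k, hk⟩ := Subgroup.mem_zpowers_iff.mp (aux_reach hm hb hj1)
      rw [← hk]
      exact hc.zpow_right k
  -- t = b^(2^(m-1)) is a central involution
  have ht2 : (b ^ (2 ^ (m - 1) : ℕ)) ^ 2 = 1 := by
    rw [← pow_mul]
    have h2m' : 2 ^ (m - 1) * 2 = 2 ^ m := by rw [← pow_succ]; congr 1; omega
    rw [h2m', ← hb, pow_orderOf_eq_one]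
  have htZ : b ^ (2 ^ (m - 1) : ℕ) ∈ Subgroup.center G :=
    center_of _ hK ((Commute.refl b).pow_right _)
  -- b a b⁻¹ = a^r with r odd
  obtain ⟨r, hr⟩ := Subgroup.mem_zpowers_iff.mp (hN.conj_mem a (Subgroup.mem_zpowers a) b)
  have hodd : ∃ s : ℤ, r = 2 * s + 1 := by
    rcases Int.even_or_odd r with ⟨s, hs⟩ | ⟨s, hs⟩
    · exfalso
      have h3 : (a ^ r) ^ ((2 : ℤ) ^ (n - 1)) = 1 := by
        rw [← zpow_mul, hs, show (s + s) * (2:ℤ) ^ (n - 1) = 2 ^ n * s by rw [h2n]; ring,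
          zpow_mul, haord, one_zpow]
      have h2 : (a ^ r) ^ ((2 : ℤ) ^ (n - 1)) = b * a ^ ((2 : ℤ) ^ (n - 1)) * b⁻¹ := by
        rw [hr, conj_zpow]
      rw [h3] at h2
      have h1 : a ^ ((2 : ℤ) ^ (n - 1)) = 1 := by
        have h2' := h2.symm
        rwa [mul_inv_eq_one, ← eq_inv_mul_iff_mul_eq, inv_mul_cancel] at h2'
      rw [← orderOf_dvd_iff_zpow_eq_one, ha] at h1
      push_cast at h1
      rw [h2n] at h1
      have h5 : (2:ℤ) ^ (n-1) * 2 ∣ 2 ^ (n - 1) * 1 := by rwa [mul_one]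
      have h6 := (mul_dvd_mul_iff_left (a := (2:ℤ)^(n-1))
        (by positivity : ((2:ℤ)^(n-1)) ≠ 0)).mp h5
      omega
    · exact ⟨s, hs⟩
  -- a^(2^(n-1)) is central
  have haZ : a ^ (2 ^ (n - 1) : ℕ) ∈ Subgroup.center G := by
    apply center_of
    · exact (Commute.refl a).pow_right _
    · obtain ⟨s, hs⟩ := hodd
      have hcast : a ^ ((2 : ℤ) ^ (n - 1)) = a ^ (2 ^ (n - 1) : ℕ) := by
        rw [← zpow_natCast]; congr 1
      have hconj : b * a ^ (2 ^ (n - 1) : ℕ) * b⁻¹ = a ^ (2 ^ (n - 1) : ℕ) := by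
        have h2 : b * a ^ ((2 : ℤ) ^ (n - 1)) * b⁻¹ = (a ^ r) ^ ((2 : ℤ) ^ (n - 1)) := by
          rw [hr, conj_zpow]
        have h3 : (a ^ r) ^ ((2 : ℤ) ^ (n - 1)) = a ^ ((2 : ℤ) ^ (n - 1)) := by
          rw [← zpow_mul, hs,
            show (2 * s + 1) * (2:ℤ) ^ (n - 1) = 2 ^ n * s + 2 ^ (n - 1) by rw [h2n]; ring,
            zpow_add, zpow_mul, haord, one_zpow, one_mul]
        rw [hcast] at h2 h3
        exact h2.trans h3
      show b * a ^ (2 ^ (n - 1) : ℕ) = a ^ (2 ^ (n - 1) : ℕ) * b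
      calc b * a ^ (2 ^ (n - 1) : ℕ) = (b * a ^ (2 ^ (n - 1) : ℕ) * b⁻¹) * b := by group
        _ = a ^ (2 ^ (n - 1) : ℕ) * b := by rw [hconj]
  -- elements of ⟨a⟩ killed by squaring are powers of a^(2^(n-1))
  have haI : ∀ i : ℤ, a ^ (2 * i) = 1 → a ^ i ∈ Subgroup.zpowers (a ^ (2 ^ (n - 1) : ℕ)) := by
    intro i hi
    rw [← orderOf_dvd_iff_zpow_eq_one, ha] at hi
    push_cast at hi
    rw [h2n, mul_comm ((2:ℤ)^(n-1)) 2] at hi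
    have h1 : ((2:ℤ) ^ (n - 1)) ∣ i :=
      (mul_dvd_mul_iff_left (by norm_num : (2:ℤ) ≠ 0)).mp hi
    obtain ⟨k, hk⟩ := h1
    refine Subgroup.mem_zpowers_iff.mpr ⟨k, ?_⟩
    show (a ^ (2 ^ (n - 1) : ℕ)) ^ k = a ^ i
    rw [← zpow_natCast a, ← zpow_mul, hk]
    congr 1
  -- classification of involutions
  have classify : ∀ g : G, g ^ 2 = 1 →
      g ∈ Subgroup.center G ∧
      g ∈ Subgroup.zpowers (a ^ 2 ^ (n - 1)) ⊔ Subgroup.zpowers (b ^ 2 ^ (m - 1)) := by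
    intro g hg
    obtain ⟨i, j, rfl⟩ := decomp g
    obtain ⟨s, hsz⟩ := Subgroup.mem_zpowers_iff.mp
      (hN.conj_mem (a ^ i) ⟨i, rfl⟩ (b ^ j))
    have hswap : b ^ j * a ^ i = a ^ s * b ^ j := by
      rw [hsz]; group
    have hsq : (a ^ i * b ^ j) ^ 2 = (a ^ i * a ^ s) * b ^ (2 * j) := by
      calc (a ^ i * b ^ j) ^ 2 = a ^ i * (b ^ j * a ^ i) * b ^ j := by
            rw [pow_two]; group
        _ = a ^ i * (a ^ s * b ^ j) * b ^ j := by rw [hswap]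
        _ = (a ^ i * a ^ s) * b ^ (2 * j) := by
            rw [show (2 : ℤ) * j = j + j by ring, zpow_add]; group
    have hg1 : (a ^ i * a ^ s) * b ^ (2 * j) = 1 := by rw [← hsq, hg]
    have hbj2 : b ^ (2 * j) = 1 := by
      have h1 : b ^ (2 * j) = (a ^ i * a ^ s)⁻¹ := eq_inv_of_mul_eq_one_right hg1
      have hmem : b ^ (2 * j) ∈ Subgroup.zpowers a ⊓ Subgroup.zpowers b := by
        refine Subgroup.mem_inf.mpr ⟨?_, Subgroup.mem_zpowers_iff.mpr ⟨2 * j, rfl⟩⟩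
        rw [h1, ← zpow_add]
        exact Subgroup.inv_mem _ (Subgroup.mem_zpowers_iff.mpr ⟨i + s, rfl⟩)
      rw [hint] at hmem
      exact hmem
    -- j is a multiple of 2^(m-1)
    have hj : ∃ k : ℤ, b ^ j = (b ^ (2 ^ (m - 1) : ℕ)) ^ k := by
      rw [← orderOf_dvd_iff_zpow_eq_one, hb] at hbj2
      push_cast at hbj2
      rw [h2m, mul_comm ((2:ℤ)^(m-1)) 2] at hbj2
      have h3 : ((2:ℤ) ^ (m - 1)) ∣ j :=
        (mul_dvd_mul_iff_left (by norm_num : (2:ℤ) ≠ 0)).mp hbj2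
      obtain ⟨k, hk⟩ := h3
      refine ⟨k, ?_⟩
      rw [← zpow_natCast b, ← zpow_mul, hk]
      congr 1
    obtain ⟨k, hk⟩ := hj
    have hbjZ : b ^ j ∈ Subgroup.center G := by
      rw [hk]; exact Subgroup.zpow_mem _ htZ k
    have htk : (b ^ j) * (b ^ j) = 1 := by
      rw [hk, ← zpow_add, show k + k = 2 * k by ring, zpow_mul]
      have h4 : (b ^ (2 ^ (m - 1) : ℕ)) ^ (2 : ℤ) = 1 := by
        rw [show ((2:ℤ)) = ((2:ℕ) : ℤ) by norm_num, zpow_natCast, ht2]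
      rw [h4, one_zpow]
    have htc : Commute (a ^ i) (b ^ j) :=
      Subgroup.mem_center_iff.mp hbjZ (a ^ i)
    -- a^(2i) = 1
    have hai : a ^ (2 * i) = 1 := by
      have h1 : (a ^ i * b ^ j) ^ 2 = a ^ (2 * i) * ((b ^ j) * (b ^ j)) := by
        rw [pow_two, show (2:ℤ) * i = i + i by ring, zpow_add]
        calc a ^ i * b ^ j * (a ^ i * b ^ j)
            = a ^ i * (b ^ j * a ^ i) * b ^ j := by group
          _ = a ^ i * (a ^ i * b ^ j) * b ^ j := by rw [← htc.eq]
          _ = a ^ i * a ^ i * (b ^ j * b ^ j) := by group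
      have h2 : a ^ (2 * i) * ((b ^ j) * (b ^ j)) = 1 := by rw [← h1, hg]
      rwa [htk, mul_one] at h2
    have haiZ : a ^ i ∈ Subgroup.center G := by
      obtain ⟨k', hk'⟩ := Subgroup.mem_zpowers_iff.mp (haI i hai)
      rw [← hk']
      exact Subgroup.zpow_mem _ haZ k'
    refine ⟨Subgroup.mul_mem _ haiZ hbjZ, ?_⟩
    refine Subgroup.mul_mem _ (Subgroup.mem_sup_left (haI i hai))
      (Subgroup.mem_sup_right ?_)
    exact Subgroup.mem_zpowers_iff.mpr ⟨k, hk.symm⟩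
  -- assemble
  constructor
  · rw [Subgroup.closure_le]
    intro g hg
    exact (classify g hg).1
  · refine le_antisymm ?_ ?_
    · rw [Subgroup.closure_le]
      intro g hg
      exact (classify g hg).2
    · refine sup_le ?_ ?_ <;> rw [Subgroup.zpowers_le] <;> apply Subgroup.subset_closure
      · show (a ^ 2 ^ (n - 1)) ^ 2 = 1
        rw [← pow_mul, show 2 ^ (n-1) * 2 = 2 ^ n by rw [← pow_succ]; congr 1; omega,
          ← ha, pow_orderOf_eq_one]
      · show (b ^ 2 ^ (m - 1)) ^ 2 = 1
        exact ht2
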